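/- Let N ≥ 1, let A be a symmetric positive definite real N×N matrix, let b ∈ ℝ^N and x⋆ := A⁻¹b. Let q ∈ (0,1) and let B : ℝ^N → ℝ^N be a (possibly nonlinear) map satisfying |y − B(A y)|_A ≤ q |y|_A for all y ∈ ℝ^N. Given an initial guess x⁰ ∈ ℝ^N, define the generalized preconditioned conjugate gradient (GPCG) sequences by r⁰ := b − A x⁰, p⁰ := B(r⁰), and for k ≥ 0: α_k := (B(r^k) · r^k) / ((p^k)ᵀ A p^k), x^{k+1} := x^k + α_k p^k, r^{k+1} := r^k − α_k A p^k, β_k := (B(r^{k+1}) · r^{k+1} − B(r^{k+1}) · r^k) / (B(r^k) · r^k), p^{k+1} := B(r^{k+1}) + β_k p^k. Then for every k ∈ ℕ such that r^j ≠ 0 and p^j ≠ 0 for all 0 ≤ j ≤ k, one has |x⋆ − x^{k+1}|_A ≤ q |x⋆ − x^k|_A. -/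

import Mathlib

open Matrix

/-- The `A`-norm `|x|_A := √(xᵀ A x)` induced by a matrix `A`. -/
noncomputable def anorm {N : ℕ} (A : Matrix (Fin N) (Fin N) ℝ) (x : Fin N → ℝ) : ℝ :=
  Real.sqrt (x ⬝ᵥ A.mulVec x)

namespace GPCGaux

variable {N : ℕ} {A : Matrix (Fin N) (Fin N) ℝ}

lemma sym (hA : A.PosDef) (x y : Fin N → ℝ) :
    x ⬝ᵥ A.mulVec y = y ⬝ᵥ A.mulVec x := by
  have hsym : Aᵀ = A := by
    have := hA.isHermitian
    rwa [Matrix.IsHermitian, conjTranspose_eq_transpose_of_trivial] at this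
  rw [dotProduct_mulVec, ← mulVec_transpose, hsym, dotProduct_comm]

lemma qf_pos (hA : A.PosDef) {v : Fin N → ℝ} (hv : v ≠ 0) : 0 < v ⬝ᵥ A.mulVec v := by
  simpa using hA.dotProduct_mulVec_pos hv

lemma qf_nonneg (hA : A.PosDef) (v : Fin N → ℝ) : 0 ≤ v ⬝ᵥ A.mulVec v := by
  simpa using hA.posSemidef.dotProduct_mulVec_nonneg v

lemma anorm_le_of_orth (hA : A.PosDef) (u w : Fin N → ℝ)
    (h : u ⬝ᵥ A.mulVec w = 0) : anorm A u ≤ anorm A (u + w) := by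
  unfold anorm
  apply Real.sqrt_le_sqrt
  have h' : w ⬝ᵥ A.mulVec u = 0 := by rw [sym hA, h]
  have hw := qf_nonneg hA w
  have expand : (u + w) ⬝ᵥ A.mulVec (u + w)
      = u ⬝ᵥ A.mulVec u + (u ⬝ᵥ A.mulVec w + (w ⬝ᵥ A.mulVec u + w ⬝ᵥ A.mulVec w)) := by
    simp [Matrix.mulVec_add, dotProduct_add, add_dotProduct]
    ring
  rw [expand, h, h']
  linarith

lemma anorm_sq (hA : A.PosDef) (v : Fin N → ℝ) :
    anorm A v ^ 2 = v ⬝ᵥ A.mulVec v := Real.sq_sqrt (qf_nonneg hA v)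

lemma anorm_nonneg (A : Matrix (Fin N) (Fin N) ℝ) (v : Fin N → ℝ) :
    0 ≤ anorm A v := Real.sqrt_nonneg _

end GPCGaux

/-- Contraction of the generalized preconditioned conjugate gradient (GPCG) method:
if the (possibly nonlinear) preconditioner `B` satisfies
`|y − B(A y)|_A ≤ q |y|_A` for all `y` with `q ∈ (0,1)`, then the GPCG iterates
contract with factor `q` in the `A`-norm, as long as the residuals and search
directions do not vanish. -/
theorem gpcg_contraction {N : ℕ} (hN : 1 ≤ N)
    (A : Matrix (Fin N) (Fin N) ℝ) (hA : A.PosDef)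
    (b xstar : Fin N → ℝ) (hxstar : A.mulVec xstar = b)
    (q : ℝ) (hq0 : 0 < q) (hq1 : q < 1)
    (B : (Fin N → ℝ) → (Fin N → ℝ))
    (hB : ∀ y : Fin N → ℝ, anorm A (y - B (A.mulVec y)) ≤ q * anorm A y)
    (x r p : ℕ → Fin N → ℝ) (α β : ℕ → ℝ)
    (hr0 : r 0 = b - A.mulVec (x 0))
    (hp0 : p 0 = B (r 0))
    (hα : ∀ k, α k = (B (r k) ⬝ᵥ r k) / (p k ⬝ᵥ A.mulVec (p k)))
    (hxs : ∀ k, x (k + 1) = x k + α k • p k)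
    (hrs : ∀ k, r (k + 1) = r k - α k • A.mulVec (p k))
    (hβ : ∀ k, β k = (B (r (k + 1)) ⬝ᵥ r (k + 1) - B (r (k + 1)) ⬝ᵥ r k) /
      (B (r k) ⬝ᵥ r k))
    (hps : ∀ k, p (k + 1) = B (r (k + 1)) + β k • p k)
    (k : ℕ) (hnz : ∀ j ≤ k, r j ≠ 0 ∧ p j ≠ 0) :
    anorm A (xstar - x (k + 1)) ≤ q * anorm A (xstar - x k) := by
  have hsym := GPCGaux.sym hA
  -- residual = A * error
  have hre : ∀ j, r j = A.mulVec (xstar - x j) := by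
    intro j; induction j with
    | zero => rw [hr0, ← hxstar, ← Matrix.mulVec_sub]
    | succ n ih =>
      rw [hrs, ih, hxs, ← Matrix.mulVec_smul, ← Matrix.mulVec_sub]
      congr 1
      abel
  -- α times denominator
  have hαD : ∀ j, p j ≠ 0 → α j * (p j ⬝ᵥ A.mulVec (p j)) = B (r j) ⬝ᵥ r j := by
    intro j hj
    rw [hα j, div_mul_cancel₀ _ (GPCGaux.qf_pos hA hj).ne']
  -- positivity of B(r)·r
  have hBpos : ∀ j, r j ≠ 0 → 0 < B (r j) ⬝ᵥ r j := by
    intro j hj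
    set y := xstar - x j with hy_def
    have hy : A.mulVec y = r j := (hre j).symm
    have hyne : y ≠ 0 := fun h => hj (by rw [← hy, h, Matrix.mulVec_zero])
    have h1 := hB y
    rw [hy] at h1
    have h2 : anorm A (y - B (r j)) ^ 2 ≤ q ^ 2 * anorm A y ^ 2 := by
      have := GPCGaux.anorm_nonneg A (y - B (r j))
      nlinarith [GPCGaux.anorm_nonneg A y]
    rw [GPCGaux.anorm_sq hA, GPCGaux.anorm_sq hA] at h2
    have c1 : y ⬝ᵥ A.mulVec (B (r j)) = B (r j) ⬝ᵥ r j := by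
      rw [hsym, hy]
    have c2 : B (r j) ⬝ᵥ A.mulVec y = B (r j) ⬝ᵥ r j := by rw [hy]
    have expand : (y - B (r j)) ⬝ᵥ A.mulVec (y - B (r j))
        = y ⬝ᵥ A.mulVec y - y ⬝ᵥ A.mulVec (B (r j)) - B (r j) ⬝ᵥ A.mulVec y
          + B (r j) ⬝ᵥ A.mulVec (B (r j)) := by
      simp [Matrix.mulVec_sub, dotProduct_sub, sub_dotProduct]
      ring
    rw [expand, c1, c2] at h2
    have hyA := GPCGaux.qf_pos hA hyne
    have hBA := GPCGaux.qf_nonneg hA (B (r j))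
    nlinarith [mul_pos (show (0:ℝ) < 1 - q ^ 2 by nlinarith) hyA]
  -- key invariant
  have H : ∀ j, j ≤ k → r j ⬝ᵥ p j = B (r j) ⬝ᵥ r j := by
    intro j
    induction j with
    | zero => intro _; rw [hp0, dotProduct_comm]
    | succ n ih =>
      intro hjk
      have hn : n ≤ k := Nat.le_of_succ_le hjk
      have horth : r (n + 1) ⬝ᵥ p n = 0 := by
        rw [hrs, sub_dotProduct, smul_dotProduct, smul_eq_mul,
          dotProduct_comm (A.mulVec (p n)) (p n), hαD n (hnz n hn).2, ih hn, sub_self]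
      rw [hps, dotProduct_add, dotProduct_smul, horth, smul_zero, add_zero,
        dotProduct_comm]
  have step : ∀ j, j ≤ k → r (j + 1) ⬝ᵥ p j = 0 := by
    intro j hj
    rw [hrs, sub_dotProduct, smul_dotProduct, smul_eq_mul,
      dotProduct_comm (A.mulVec (p j)) (p j), hαD j (hnz j hj).2, H j hj, sub_self]
  -- orthogonality of the new error to p k
  have horth_k : (xstar - x (k + 1)) ⬝ᵥ A.mulVec (p k) = 0 := by
    calc (xstar - x (k + 1)) ⬝ᵥ A.mulVec (p k)
        = p k ⬝ᵥ A.mulVec (xstar - x (k + 1)) := hsym _ _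
      _ = p k ⬝ᵥ r (k + 1) := by rw [← hre]
      _ = r (k + 1) ⬝ᵥ p k := dotProduct_comm _ _
      _ = 0 := step k le_rfl
  cases k with
  | zero =>
    have key : xstar - x 0 - B (r 0) = (xstar - x 1) + (α 0 - 1) • p 0 := by
      rw [hxs 0, hp0]
      module
    have horthw : (xstar - x 1) ⬝ᵥ A.mulVec ((α 0 - 1) • p 0) = 0 := by
      rw [Matrix.mulVec_smul, dotProduct_smul, horth_k, smul_zero]
    have hle := GPCGaux.anorm_le_of_orth hA _ _ horthw
    rw [← key] at hle
    have hBq := hB (xstar - x 0)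
    rw [← hre 0] at hBq
    exact hle.trans hBq
  | succ m =>
    have hm : m ≤ m + 1 := Nat.le_succ m
    have hDm : (0:ℝ) < p m ⬝ᵥ A.mulVec (p m) := GPCGaux.qf_pos hA (hnz m hm).2
    have hBrm : 0 < B (r m) ⬝ᵥ r m := hBpos m (hnz m hm).1
    have hαm : α m ≠ 0 := by
      intro h
      have := hαD m (hnz m hm).2
      rw [h, zero_mul] at this
      exact hBrm.ne this
    -- A-conjugacy of successive directions
    have hconj : p (m + 1) ⬝ᵥ A.mulVec (p m) = 0 := by
      set c := B (r (m + 1)) ⬝ᵥ A.mulVec (p m) with hc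
      have hnum : B (r (m + 1)) ⬝ᵥ r (m + 1) - B (r (m + 1)) ⬝ᵥ r m = -(α m * c) := by
        rw [← dotProduct_sub]
        have : r (m + 1) - r m = -(α m) • A.mulVec (p m) := by
          rw [hrs m]; module
        rw [this, dotProduct_smul, smul_eq_mul]
        ring
      have hβm : β m * (p m ⬝ᵥ A.mulVec (p m)) = -c := by
        rw [hβ m, hnum, ← hαD m (hnz m hm).2]
        field_simp
      rw [hps m, add_dotProduct, smul_dotProduct, smul_eq_mul, hβm, ← hc]
      ring
    -- orthogonality of the new error to p m
    have horth_prev : (xstar - x (m + 1 + 1)) ⬝ᵥ A.mulVec (p m) = 0 := by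
      have h1 : r (m + 1 + 1) ⬝ᵥ p m = 0 := by
        rw [hrs (m + 1), sub_dotProduct, smul_dotProduct, smul_eq_mul,
          dotProduct_comm (A.mulVec (p (m + 1))) (p m), hsym (p m) (p (m + 1)),
          hconj, step m hm]
        ring
      calc (xstar - x (m + 1 + 1)) ⬝ᵥ A.mulVec (p m)
          = p m ⬝ᵥ A.mulVec (xstar - x (m + 1 + 1)) := hsym _ _
        _ = p m ⬝ᵥ r (m + 1 + 1) := by rw [← hre]
        _ = r (m + 1 + 1) ⬝ᵥ p m := dotProduct_comm _ _
        _ = 0 := h1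
    have key : xstar - x (m + 1) - B (r (m + 1)) =
        (xstar - x (m + 1 + 1)) + ((α (m + 1) - 1) • p (m + 1) + β m • p m) := by
      rw [hxs (m + 1), hps m]
      module
    have horthw : (xstar - x (m + 1 + 1)) ⬝ᵥ
        A.mulVec ((α (m + 1) - 1) • p (m + 1) + β m • p m) = 0 := by
      rw [Matrix.mulVec_add, Matrix.mulVec_smul, Matrix.mulVec_smul, dotProduct_add,
        dotProduct_smul, dotProduct_smul, horth_k, horth_prev, smul_zero, smul_zero,
        add_zero]
    have hle := GPCGaux.anorm_le_of_orth hA _ _ horthw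
    rw [← key] at hle
    have hBq := hB (xstar - x (m + 1))
    rw [← hre (m + 1)] at hBq
    exact hle.trans hBq
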